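/- Let 0 < r̂ < r < +∞. Let (n_k)_{k≥1}, (m_k)_{k≥1} be sequences of positive integers with n_k ≤ m_k and n_{k+1} ≥ (1 + r̂/2) n_k for all k, and suppose that for every ε > 0 one has, for all sufficiently large k, m_k − n_k ≤ (r + ε) n_k and m_k − n_k ≥ (r̂ − ε) n_{k+1}. Then for every ε' > 0 there exists K such that for all k ≥ K, Σ_{i=1}^{k} (m_i − n_i) ≥ n_{k+1} ( r̂ r/(r − r̂) − ε' ). -/

import Mathlib

open Filter
open scoped BigOperators

theorem sum_lower_bound (r rhat : ℝ) (h0 : 0 < rhat) (h1 : rhat < r)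
    (n m : ℕ → ℕ)
    (hpos : ∀ k, 1 ≤ k → 0 < n k) (hle : ∀ k, 1 ≤ k → n k ≤ m k)
    (hgrow : ∀ k, 1 ≤ k → (1 + rhat / 2) * (n k : ℝ) ≤ (n (k + 1) : ℝ))
    (hbound : ∀ ε : ℝ, 0 < ε → ∀ᶠ k in atTop,
      ((m k : ℝ) - (n k : ℝ) ≤ (r + ε) * (n k : ℝ) ∧
       (rhat - ε) * (n (k + 1) : ℝ) ≤ (m k : ℝ) - (n k : ℝ))) :
    ∀ ε' : ℝ, 0 < ε' → ∃ K : ℕ, ∀ k, K ≤ k →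
      (n (k + 1) : ℝ) * (rhat * r / (r - rhat) - ε')
        ≤ ∑ i ∈ Finset.Icc 1 k, ((m i : ℝ) - (n i : ℝ)) := by
  intro ε' hε'
  set t : ℝ := rhat * r / (r - rhat) - ε' with ht
  have hsum_nonneg : ∀ k : ℕ, (0:ℝ) ≤ ∑ i ∈ Finset.Icc 1 k, ((m i : ℝ) - (n i : ℝ)) := by
    intro k
    refine Finset.sum_nonneg fun i hi => sub_nonneg.2 ?_
    exact_mod_cast hle i (Finset.mem_Icc.1 hi).1
  by_cases hts : t ≤ 0
  · refine ⟨1, fun k _ => ?_⟩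
    have h1 : (0:ℝ) ≤ (n (k+1) : ℝ) := Nat.cast_nonneg _
    nlinarith [hsum_nonneg k]
  push_neg at hts
  have hrr : (0:ℝ) < r - rhat := sub_pos.2 h1
  -- choose ε > 0 with ε < rhat and t < (rhat-ε)(r+ε)/(r-rhat+2ε)
  have hcont : ContinuousAt (fun ε : ℝ => (rhat - ε) * (r + ε) / (r - rhat + 2*ε)) 0 := by
    apply ContinuousAt.div
    · fun_prop
    · fun_prop
    · simpa using hrr.ne'
  have hval : (rhat - 0) * (r + 0) / (r - rhat + 2*0) = rhat * r / (r - rhat) := by norm_num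
  have hf0 : t < (rhat - 0) * (r + 0) / (r - rhat + 2*0) := by
    rw [hval]; simp only [ht]; linarith
  have hev1 : ∀ᶠ ε in nhds (0:ℝ), t < (rhat - ε) * (r + ε) / (r - rhat + 2*ε) :=
    ContinuousAt.eventually_lt continuousAt_const hcont hf0
  have hev2 : ∀ᶠ ε in nhds (0:ℝ), ε < rhat := eventually_lt_nhds h0
  have hev : ∀ᶠ ε in nhdsWithin (0:ℝ) (Set.Ioi 0),
      (t < (rhat - ε) * (r + ε) / (r - rhat + 2*ε) ∧ ε < rhat) ∧ 0 < ε := by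
    refine ((hev1.and hev2).filter_mono nhdsWithin_le_nhds).and ?_
    exact eventually_mem_nhdsWithin.mono fun x hx => hx
  obtain ⟨ε, ⟨hft, hεr⟩, hε⟩ := hev.exists
  -- constants
  set a : ℝ := rhat - ε with hadef
  set b : ℝ := r + ε with hbdef
  have ha : 0 < a := by simp [hadef]; linarith
  have hb : 0 < b := by simp [hbdef]; linarith
  have hba : a < b := by simp [hadef, hbdef]; linarith
  set p : ℝ := a / b with hpdef
  have hp0 : 0 < p := div_pos ha hb
  have hp1 : p < 1 := (div_lt_one hb).2 hba
  set c : ℝ := a * b / (b - a) with hcdef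
  have hbane : b - a ≠ 0 := by linarith
  have hc : 0 < c := div_pos (mul_pos ha hb) (by linarith)
  have hct : t < c := by
    have he : r - rhat + 2*ε = b - a := by rw [hadef, hbdef]; ring
    rw [hcdef, ← he]
    convert hft using 2 <;> rw [hadef, hbdef]
  have hae : c * (1 - p) = a := by
    simp only [hcdef, hpdef]
    field_simp
  -- get K0
  obtain ⟨K0, hK0⟩ := eventually_atTop.1 (hbound ε hε)
  set K : ℕ := max K0 1 with hKdef
  have hK1 : 1 ≤ K := le_max_right _ _
  have hKb : ∀ k, K ≤ k → ((m k : ℝ) - n k ≤ b * n k ∧ a * n (k+1) ≤ (m k : ℝ) - n k) :=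
    fun k hk => hK0 k (le_trans (le_max_left _ _) hk)
  have hstep : ∀ k, K ≤ k → p * (n (k+1) : ℝ) ≤ (n k : ℝ) := by
    intro k hk
    obtain ⟨h1', h2'⟩ := hKb k hk
    rw [hpdef, div_mul_eq_mul_div, div_le_iff₀ hb]
    nlinarith
  -- main induction
  have hind : ∀ j : ℕ, c * (1 - p^(j+1)) * (n (K+j+1) : ℝ)
      ≤ ∑ i ∈ Finset.Icc 1 (K+j), ((m i : ℝ) - (n i : ℝ)) := by
    intro j
    induction j with
    | zero =>
      have hmem : K ∈ Finset.Icc 1 K := Finset.mem_Icc.2 ⟨hK1, le_refl _⟩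
      have hsingle : ((m K : ℝ) - n K) ≤ ∑ i ∈ Finset.Icc 1 K, ((m i : ℝ) - (n i : ℝ)) := by
        refine Finset.single_le_sum (f := fun i => ((m i : ℝ) - (n i : ℝ))) (fun i hi => sub_nonneg.2 ?_) hmem
        exact_mod_cast hle i (Finset.mem_Icc.1 hi).1
      have := (hKb K (le_refl _)).2
      have hc1 : c * (1 - p^(0+1)) = a := by rw [pow_one]; exact hae
      simp only [Nat.add_zero]
      rw [hc1]
      linarith
    | succ j ih =>
      have hksucc : K + j + 1 = K + (j+1) := by ring
      have hIcc : ∑ i ∈ Finset.Icc 1 (K+(j+1)), ((m i : ℝ) - (n i : ℝ))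
          = (∑ i ∈ Finset.Icc 1 (K+j), ((m i : ℝ) - (n i : ℝ))) + ((m (K+j+1) : ℝ) - n (K+j+1)) := by
        rw [← hksucc, ← Finset.sum_Icc_succ_top (by omega : 1 ≤ K + j + 1)]
      rw [hIcc]
      have hterm := (hKb (K+j+1) (by omega)).2
      have hmono := hstep (K+j+1) (by omega)
      have hcj : 0 ≤ c * (1 - p^(j+1)) := by
        have : p^(j+1) ≤ 1 := pow_le_one₀ hp0.le hp1.le
        nlinarith
      have hid : c * (1 - p^(j+1)) * p + a = c * (1 - p^(j+2)) := by
        rw [← hae]; ring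
      have hmul : c * (1 - p^(j+1)) * (p * (n (K+j+2) : ℝ)) ≤ c * (1 - p^(j+1)) * (n (K+j+1) : ℝ) :=
        mul_le_mul_of_nonneg_left hmono hcj
      have hn2 : (0:ℝ) ≤ (n (K+j+2) : ℝ) := Nat.cast_nonneg _
      have hgoal : c * (1 - p^(j+2)) * (n (K+j+2) : ℝ)
          ≤ (∑ i ∈ Finset.Icc 1 (K+j), ((m i : ℝ) - (n i : ℝ))) + ((m (K+j+1) : ℝ) - n (K+j+1)) := by
        have e1 : c * (1 - p^(j+2)) * (n (K+j+2) : ℝ)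
            = c * (1 - p^(j+1)) * (p * (n (K+j+2) : ℝ)) + a * (n (K+j+2) : ℝ) := by
          rw [← hid]; ring
        rw [e1]
        have h2 : a * (n (K+j+2) : ℝ) ≤ (m (K+j+1) : ℝ) - n (K+j+1) := by
          convert hterm using 3 <;> omega
        linarith
      have he : K + (j+1) + 1 = K + j + 2 := by omega
      rw [he]
      convert hgoal using 4 <;> omega
  -- choose N
  obtain ⟨N, hN⟩ := exists_pow_lt_of_lt_one (div_pos (by linarith : (0:ℝ) < c - t) hc) hp1
  refine ⟨K + N, fun k hk => ?_⟩
  obtain ⟨j, rfl⟩ : ∃ j, k = K + j := ⟨k - K, by omega⟩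
  have hNj : N ≤ j + 1 := by omega
  have hpow : p^(j+1) ≤ p^N := pow_le_pow_of_le_one hp0.le hp1.le hNj
  have hkey := hind j
  have hcp : t ≤ c * (1 - p^(j+1)) := by
    have hd : p^N < (c - t)/c := hN
    have : c * p^(j+1) ≤ c * p^N := mul_le_mul_of_nonneg_left hpow hc.le
    have h2 : c * p^N < c - t := by
      have h3 := (lt_div_iff₀ hc).1 hd
      nlinarith
    linarith
  have hn1 : (0:ℝ) ≤ (n (K+j+1) : ℝ) := Nat.cast_nonneg _
  calc (n (K+j+1) : ℝ) * t ≤ (n (K+j+1) : ℝ) * (c * (1 - p^(j+1))) :=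
        mul_le_mul_of_nonneg_left hcp hn1
    _ = c * (1 - p^(j+1)) * (n (K+j+1) : ℝ) := by ring
    _ ≤ _ := hkey
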